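/- For the weight-balancing imbalance-correcting update, the Lyapunov function V_wb(A) = ∑_i |∑_j a_{ij} − ∑_j a_{ji}| is non-increasing: if an agent v_i with positive imbalance ω(v_i) > 0 increases the weight of a single out-edge (v_i, v_j), j ≠ i, by ω(v_i) and all other weights are unchanged, then V_wb of the new matrix is at most V_wb of the old matrix. -/

import Mathlib

/-- The Lyapunov function `V_wb(A) = ∑_i |ω(v_i)|` is non-increasing along the
imbalance-correcting update: if agent `i`, with positive imbalance, adds her
imbalance to the weight of the single out-edge `(i,j)`, `j ≠ i`, then `V_wb`
does not increase. -/
theorem lyapunov_nonincreasing {n : ℕ}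
    (A : Matrix (Fin n) (Fin n) ℝ) (hnn : ∀ i j, 0 ≤ A i j)
    (i j : Fin n) (hij : i ≠ j)
    (hpos : 0 < (∑ u, A u i) - (∑ u, A i u))
    (B : Matrix (Fin n) (Fin n) ℝ)
    (hB : B = A + Matrix.single i j ((∑ u, A u i) - (∑ u, A i u))) :
    ∑ k, |(∑ u, B u k) - (∑ u, B k u)| ≤
      ∑ k, |(∑ u, A u k) - (∑ u, A k u)| := by
  set c := (∑ u, A u i) - (∑ u, A i u) with hc
  have hcol : ∀ k, (∑ u, B u k) = (∑ u, A u k) + if k = j then c else 0 := by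
    intro k
    subst hB
    simp only [Matrix.add_apply, Finset.sum_add_distrib]
    congr 1
    by_cases hk : k = j
    · subst hk
      simp [Matrix.single, Finset.sum_ite_eq]
    · rw [if_neg hk]
      apply Finset.sum_eq_zero
      intro x _
      simp only [Matrix.single, Matrix.of_apply]
      rw [if_neg]
      rintro ⟨-, h⟩
      exact hk h.symm
  have hrow : ∀ k, (∑ u, B k u) = (∑ u, A k u) + if k = i then c else 0 := by
    intro k
    subst hB
    simp only [Matrix.add_apply, Finset.sum_add_distrib]
    congr 1
    by_cases hk : k = i
    · subst hk
      simp [Matrix.single, Finset.sum_ite_eq']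
    · rw [if_neg hk]
      apply Finset.sum_eq_zero
      intro x _
      simp only [Matrix.single, Matrix.of_apply]
      rw [if_neg]
      rintro ⟨h, -⟩
      exact hk h.symm
  set f : Fin n → ℝ := fun k => |(∑ u, B u k) - (∑ u, B k u)| with hf
  set g : Fin n → ℝ := fun k => |(∑ u, A u k) - (∑ u, A k u)| with hg
  have hsplit : ∀ (M : Fin n → ℝ), ∑ k, M k
      = M i + (M j + ∑ k ∈ (Finset.univ.erase i).erase j, M k) := by
    intro M
    rw [← Finset.add_sum_erase _ M (Finset.mem_univ i),
      ← Finset.add_sum_erase _ M (Finset.mem_erase.2 ⟨hij.symm, Finset.mem_univ j⟩)]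
  have hfi : f i = 0 := by
    simp only [hf, hcol, hrow]
    rw [if_neg hij, if_true, add_zero]
    rw [abs_eq_zero, hc]
    ring
  have hfj : f j ≤ g j + g i := by
    simp only [hf, hg, hcol, hrow]
    rw [if_true, if_neg (fun h : j = i => hij h.symm), add_zero]
    have h1 : |((∑ u, A u j) + c) - (∑ u, A j u)|
        ≤ |(∑ u, A u j) - (∑ u, A j u)| + |c| := by
      have := abs_add_le ((∑ u, A u j) - (∑ u, A j u)) c
      calc |((∑ u, A u j) + c) - (∑ u, A j u)|
          = |((∑ u, A u j) - (∑ u, A j u)) + c| := by ring_nf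
        _ ≤ _ := this
    have h2 : |c| = |(∑ u, A u i) - (∑ u, A i u)| := by rw [hc]
    linarith [h1, h2]
  have hrest : ∀ k ∈ (Finset.univ.erase i).erase j, f k = g k := by
    intro k hk
    simp only [Finset.mem_erase] at hk
    simp only [hf, hg, hcol, hrow, if_neg hk.1, if_neg hk.2.1, add_zero]
  have hgi : 0 ≤ g i := abs_nonneg _
  have hrestsum : ∑ k ∈ (Finset.univ.erase i).erase j, f k
      = ∑ k ∈ (Finset.univ.erase i).erase j, g k := Finset.sum_congr rfl hrest
  rw [hsplit f, hsplit g]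
  linarith
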